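/- Let Δ = ⟨F_1,…,F_r⟩ ∪ ⟨G_1,…,G_s⟩ be a Cohen-Macaulay simplicial forest on vertex set V(Δ) with R = K[x_v : v ∈ V(Δ)]. Suppose F₁ is a special leaf of Δ with F₁ ∩ G_j ≠ ∅ for some j, and set A = ⋂_{j : F₁∩G_j ≠ ∅}(F₁ ∩ G_j). Then for each 2 ≤ k ≤ ν(Δ), ((I(Δ)^{[k]} + ⟨x_{F₁}⟩) : x_A) = I(Δ_A)^{[k]} + ⟨x_{F₁∖A}⟩. -/

import Mathlib

open MvPolynomial

/-- A simplicial complex on the vertex set `V`, presented by its set of facets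
(the maximal faces).  Every facet is nonempty and no facet contains another. -/
structure SimplicialComplexOn (V : Type) [Fintype V] [DecidableEq V] : Type where
  facets : Finset (Finset V)
  nonempty_facet : ∀ F ∈ facets, F.Nonempty
  antichain : ∀ F ∈ facets, ∀ G ∈ facets, F ⊆ G → F = G

variable {V : Type} [Fintype V] [DecidableEq V]

/-- `F` is a leaf of the collection of facets `S`: either `F` is the only facet, or
there is a facet `G ≠ F` (a joint) with `F ∩ H ⊆ F ∩ G` for every facet `H ≠ F`. -/
def IsLeafOf (S : Finset (Finset V)) (F : Finset V) : Prop :=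
  F ∈ S ∧ ((∀ H ∈ S, H = F) ∨
    ∃ G ∈ S, G ≠ F ∧ ∀ H ∈ S, H ≠ F → F ∩ H ⊆ F ∩ G)

/-- The forest property for a facet collection: every nonempty subcollection
(i.e. every nonempty subcomplex) has a leaf. -/
def HasLeafProp (S : Finset (Finset V)) : Prop :=
  ∀ T ⊆ S, T.Nonempty → ∃ F, IsLeafOf T F

/-- A good leaf: a facet which is a leaf of every subcomplex containing it. -/
def IsGoodLeafOf (S : Finset (Finset V)) (F : Finset V) : Prop :=
  F ∈ S ∧ ∀ T ⊆ S, F ∈ T → IsLeafOf T F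

/-- A special leaf: a leaf `F` such that for all facets `H, H' ≠ F`,
`H ∩ H' ≠ ∅` iff `(H ∩ H') \ F ≠ ∅`. -/
def IsSpecialLeafOf (S : Finset (Finset V)) (F : Finset V) : Prop :=
  IsLeafOf S F ∧ ∀ H ∈ S, ∀ H' ∈ S, H ≠ F → H' ≠ F →
    ((H ∩ H').Nonempty ↔ ((H ∩ H') \ F).Nonempty)

/-- A matching: a subcollection of the facets that is pairwise disjoint. -/
def IsMatchingOf (S : Finset (Finset V)) (M : Finset (Finset V)) : Prop :=
  M ⊆ S ∧ ∀ F ∈ M, ∀ G ∈ M, F ≠ G → F ∩ G = ∅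

/-- The matching number: maximum size of a matching. -/
noncomputable def matchingNumberOf (S : Finset (Finset V)) : ℕ :=
  sSup {n | ∃ M : Finset (Finset V), IsMatchingOf S M ∧ M.card = n}

/-- The facet collection `S` is grafted: it decomposes as `Fs ∪ Gs` where
(1) every vertex of a `G ∈ Gs` lies in some `F ∈ Fs`, (2) `Fs` is exactly the set
of leaves of `S`, (3) `Fs` and `Gs` are disjoint, (4) the members of `Fs` are
pairwise disjoint, and (5) for each `G ∈ Gs`, deleting the facet `G` leaves a
grafted collection. -/
inductive IsGrafted : Finset (Finset V) → Prop where
  | intro (S Fs Gs : Finset (Finset V))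
      (hunion : S = Fs ∪ Gs)
      (hdisj : Disjoint Fs Gs)
      (hcover : ∀ G ∈ Gs, ∀ v ∈ G, ∃ F ∈ Fs, v ∈ F)
      (hleaves : ∀ F, IsLeafOf S F ↔ F ∈ Fs)
      (hFdisj : ∀ F ∈ Fs, ∀ F' ∈ Fs, F ≠ F' → F ∩ F' = ∅)
      (hrec : ∀ G ∈ Gs, IsGrafted (S.erase G)) :
      IsGrafted S

/-- `S` is the (minimal presentation of the) grafting of the collection `Gs`
with the simplices `Fs`. -/
def IsGraftingDecomp (S Fs Gs : Finset (Finset V)) : Prop :=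
  S = Fs ∪ Gs ∧ Disjoint Fs Gs ∧
  (∀ G ∈ Gs, ∀ v ∈ G, ∃ F ∈ Fs, v ∈ F) ∧
  (∀ F, IsLeafOf S F ↔ F ∈ Fs) ∧
  (∀ F ∈ Fs, ∀ F' ∈ Fs, F ≠ F' → F ∩ F' = ∅) ∧
  (∀ G ∈ Gs, IsGrafted (S.erase G))

/-- A Cohen-Macaulay simplicial forest, combinatorially: a grafted simplicial forest. -/
def IsCMForestFacets (S : Finset (Finset V)) : Prop :=
  HasLeafProp S ∧ IsGrafted S

/-- The closed neighborhood `N[F] = {F} ∪ {G ∈ S : G ≠ F, G ∩ F ≠ ∅}`. -/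
def closedNbhd (S : Finset (Finset V)) (F : Finset V) : Finset (Finset V) :=
  insert F (S.filter fun G => G ≠ F ∧ (G ∩ F).Nonempty)

/-- The contraction of the facet collection `S` on `A`: the minimal members of
`{F \ A : F ∈ S}`. -/
def contraction (S : Finset (Finset V)) (A : Finset V) : Finset (Finset V) :=
  (S.image fun F => F \ A).filter fun F' => ∀ G ∈ S, G \ A ⊆ F' → G \ A = F'

variable (K : Type) [Field K]

/-- The square-free monomial `x_S = ∏_{v ∈ S} x_v`. -/
noncomputable def xMon (S : Finset V) : MvPolynomial V K := ∏ v ∈ S, X v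

/-- The facet ideal `I(Δ) = ⟨x_F : F a facet⟩`. -/
noncomputable def facetIdealOf (S : Finset (Finset V)) : Ideal (MvPolynomial V K) :=
  Ideal.span { p | ∃ F ∈ S, p = xMon K F }

/-- The `k`-th square-free power of an ideal: the ideal generated by all
square-free monomials lying in `I ^ k`. -/
noncomputable def sqfreePow (I : Ideal (MvPolynomial V K)) (k : ℕ) :
    Ideal (MvPolynomial V K) :=
  Ideal.span { p | (∃ S : Finset V, p = xMon K S) ∧ p ∈ I ^ k }

/-- The depth of `R/I` with respect to the homogeneous maximal ideal
`m = ⟨x_v : v ∈ V⟩`: the largest length of an `R/I`-regular sequence of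
elements of `m`. -/
noncomputable def gradedDepth (I : Ideal (MvPolynomial V K)) : ℕ :=
  sSup {n | ∃ rs : List (MvPolynomial V K), rs.length = n ∧
    (∀ r ∈ rs, r ∈ Ideal.span (Set.range (X : V → MvPolynomial V K))) ∧
    RingTheory.Sequence.IsRegular (MvPolynomial V K ⧸ I) rs}

/-- `R/I` is Cohen-Macaulay: its depth equals its Krull dimension. -/
def IsCMQuot (I : Ideal (MvPolynomial V K)) : Prop :=
  ((gradedDepth K I : ℕ∞) : WithBot ℕ∞) = ringKrullDim (MvPolynomial V K ⧸ I)


namespace CMForestAux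

set_option linter.unusedSectionVars false

variable {V : Type} [Fintype V] [DecidableEq V]

noncomputable def ind (F : Finset V) : V →₀ ℕ := ∑ v ∈ F, Finsupp.single v 1

lemma ind_apply (F : Finset V) (v : V) : ind F v = if v ∈ F then 1 else 0 := by
  classical
  rw [ind, Finset.sum_apply']
  simp only [Finsupp.single_apply]
  exact Finset.sum_ite_eq' F v (fun _ => 1)

lemma ind_le_iff {F : Finset V} {d : V →₀ ℕ} : ind F ≤ d ↔ ∀ v ∈ F, 1 ≤ d v := by
  rw [Finsupp.le_def]
  constructor
  · intro h v hv; have := h v; rwa [ind_apply, if_pos hv] at this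
  · intro h v; rw [ind_apply]; split
    · exact h v ‹_›
    · exact Nat.zero_le _

lemma ind_support_eq {d : V →₀ ℕ} (h : ∀ v, d v ≤ 1) : ind d.support = d := by
  ext v
  rw [ind_apply]
  by_cases h0 : d v = 0
  · simp [Finsupp.mem_support_iff, h0]
  · rw [if_pos (Finsupp.mem_support_iff.mpr h0)]
    have := h v; omega

variable (K : Type) [Field K]

lemma ind_insert {v : V} {F : Finset V} (hv : v ∉ F) :
    ind (insert v F) = Finsupp.single v 1 + ind F := by
  rw [ind, ind, Finset.sum_insert hv]

lemma xMon_eq (F : Finset V) : xMon K F = monomial (ind F) (1 : K) := by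
  classical
  induction F using Finset.induction_on with
  | empty => simp [xMon, ind]
  | insert v F hv ih =>
    have hX : (X v : MvPolynomial V K) = monomial (Finsupp.single v 1) 1 := rfl
    rw [xMon, Finset.prod_insert hv, show (∏ w ∈ F, (X w : MvPolynomial V K)) = xMon K F from rfl,
      ih, ind_insert hv, hX, monomial_mul, one_mul]

lemma span_monomial_pow (E : Set (V →₀ ℕ)) (k : ℕ) :
    Ideal.span ((fun d => monomial d (1 : K)) '' E) ^ k =
      Ideal.span ((fun d => monomial d (1 : K)) ''
        {d | ∃ f : Fin k → (V →₀ ℕ), (∀ i, f i ∈ E) ∧ d = ∑ i, f i}) := by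
  induction k with
  | zero =>
    rw [pow_zero]
    have hset : {d | ∃ f : Fin 0 → (V →₀ ℕ), (∀ i, f i ∈ E) ∧ d = ∑ i, f i}
        = {(0 : V →₀ ℕ)} := by
      ext d
      simp only [Set.mem_setOf_eq, Set.mem_singleton_iff]
      constructor
      · rintro ⟨f, -, rfl⟩; simp
      · rintro rfl; exact ⟨Fin.elim0, fun i => i.elim0, by simp⟩
    rw [hset, Set.image_singleton]
    have : (monomial (0 : V →₀ ℕ) (1 : K)) = 1 := by simp
    rw [this, Ideal.span_singleton_one, Ideal.one_eq_top]
  | succ k ih =>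
    rw [pow_succ, ih]
    apply le_antisymm
    · rw [Ideal.span_mul_span]
      apply Ideal.span_le.mpr
      intro q hq
      rw [Set.mem_mul] at hq
      obtain ⟨s, ⟨d, ⟨f, hf, rfl⟩, rfl⟩, t, ⟨e, he, rfl⟩, rfl⟩ := hq
      apply Ideal.subset_span
      refine ⟨(∑ i, f i) + e, ⟨Fin.snoc f e, ?_, ?_⟩, ?_⟩
      · intro i
        refine Fin.lastCases ?_ ?_ i
        · rw [Fin.snoc_last]; exact he
        · intro j; rw [Fin.snoc_castSucc]; exact hf j
      · rw [Fin.sum_univ_castSucc]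
        simp [Fin.snoc_castSucc, Fin.snoc_last]
      · rw [monomial_mul, one_mul]
    · apply Ideal.span_le.mpr
      rintro q ⟨d, ⟨f, hf, rfl⟩, rfl⟩
      have key : (monomial (∑ i, f i) (1 : K)) =
          monomial (∑ i : Fin k, f i.castSucc) 1 * monomial (f (Fin.last k)) 1 := by
        rw [monomial_mul, one_mul, ← Fin.sum_univ_castSucc]
      beta_reduce
      rw [key]
      exact Ideal.mul_mem_mul
        (Ideal.subset_span ⟨_, ⟨fun j => f j.castSucc, fun j => hf _, rfl⟩, rfl⟩)
        (Ideal.subset_span ⟨_, hf _, rfl⟩)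

lemma monomial_mem_pow_iff {E : Set (V →₀ ℕ)} {d : V →₀ ℕ} {k : ℕ} :
    monomial d (1 : K) ∈ (Ideal.span ((fun d => monomial d (1 : K)) '' E)) ^ k ↔
      ∃ f : Fin k → (V →₀ ℕ), (∀ i, f i ∈ E) ∧ (∑ i, f i) ≤ d := by
  classical
  rw [span_monomial_pow, mem_ideal_span_monomial_image]
  constructor
  · intro h
    have hd : d ∈ (monomial d (1 : K)).support := by
      rw [support_monomial, if_neg one_ne_zero]; exact Finset.mem_singleton_self d
    obtain ⟨si, ⟨f, hf, rfl⟩, hle⟩ := h d hd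
    exact ⟨f, hf, hle⟩
  · rintro ⟨f, hf, hle⟩ xi hxi
    rw [support_monomial, if_neg one_ne_zero, Finset.mem_singleton] at hxi
    subst hxi
    exact ⟨∑ i, f i, ⟨f, hf, rfl⟩, hle⟩

lemma facetIdeal_repr (S : Finset (Finset V)) :
    facetIdealOf K S =
      Ideal.span ((fun d => monomial d (1 : K)) '' (ind '' (S : Set (Finset V)))) := by
  unfold facetIdealOf
  congr 1
  rw [Set.image_image]
  ext p
  simp only [Set.mem_setOf_eq, Set.mem_image, Finset.mem_coe, xMon_eq]
  constructor
  · rintro ⟨F, hF, rfl⟩; exact ⟨F, hF, rfl⟩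
  · rintro ⟨F, hF, rfl⟩; exact ⟨F, hF, rfl⟩

def SqTuple (S' : Finset (Finset V)) (k : ℕ) (e : V →₀ ℕ) : Prop :=
  ∃ f : Fin k → Finset V, (∀ i, f i ∈ S') ∧ (∀ v, (∑ i, ind (f i)) v ≤ 1) ∧
    (∑ i, ind (f i)) ≤ e

def sqSet (S' : Finset (Finset V)) (k : ℕ) : Set (V →₀ ℕ) :=
  {d | (∀ v, d v ≤ 1) ∧ ∃ f : Fin k → Finset V, (∀ i, f i ∈ S') ∧ (∑ i, ind (f i)) ≤ d}

lemma sqfreePow_repr (S' : Finset (Finset V)) (k : ℕ) :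
    sqfreePow K (facetIdealOf K S') k =
      Ideal.span ((fun d => monomial d (1 : K)) '' sqSet S' k) := by
  unfold sqfreePow
  congr 1
  ext p
  simp only [Set.mem_setOf_eq, Set.mem_image]
  constructor
  · rintro ⟨⟨T, rfl⟩, hm⟩
    refine ⟨ind T, ⟨?_, ?_⟩, (xMon_eq K T).symm⟩
    · intro v; rw [ind_apply]; split <;> omega
    · rw [facetIdeal_repr, xMon_eq] at hm
      obtain ⟨f, hf, hle⟩ := (monomial_mem_pow_iff K).mp hm
      have hf' : ∀ i, ∃ F ∈ S', ind F = f i := by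
        intro i
        obtain ⟨F, hF, hFe⟩ := hf i
        exact ⟨F, hF, hFe⟩
      choose g hg1 hg2 using hf'
      refine ⟨g, hg1, ?_⟩
      calc ∑ i, ind (g i) = ∑ i, f i := Finset.sum_congr rfl (fun i _ => hg2 i)
      _ ≤ ind T := hle
  · rintro ⟨d, ⟨hsq, f, hf, hle⟩, rfl⟩
    refine ⟨⟨d.support, ?_⟩, ?_⟩
    · rw [xMon_eq, ind_support_eq hsq]
    · rw [facetIdeal_repr]
      exact (monomial_mem_pow_iff K).mpr
        ⟨fun i => ind (f i), fun i => ⟨f i, hf i, rfl⟩, hle⟩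

lemma sum_repr (S' : Finset (Finset V)) (F₀ : Finset V) (k : ℕ) :
    sqfreePow K (facetIdealOf K S') k + Ideal.span {xMon K F₀} =
      Ideal.span ((fun d => monomial d (1 : K)) '' (sqSet S' k ∪ {ind F₀})) := by
  rw [Set.image_union, Ideal.span_union, sqfreePow_repr, Set.image_singleton, xMon_eq,
    Submodule.add_eq_sup]

lemma mem_sum_iff (S' : Finset (Finset V)) (F₀ : Finset V) (k : ℕ) (p : MvPolynomial V K) :
    p ∈ sqfreePow K (facetIdealOf K S') k + Ideal.span {xMon K F₀} ↔
      ∀ e ∈ p.support, ind F₀ ≤ e ∨ SqTuple S' k e := by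
  rw [sum_repr, mem_ideal_span_monomial_image]
  apply forall₂_congr; intro e _
  constructor
  · rintro ⟨d, hd, hle⟩
    rcases hd with hd | hd
    · right
      obtain ⟨hsq, f, hf, hfd⟩ := hd
      exact ⟨f, hf, fun v => le_trans (Finsupp.le_def.mp hfd v) (hsq v), le_trans hfd hle⟩
    · left; rw [Set.mem_singleton_iff] at hd; subst hd; exact hle
  · rintro (h | ⟨f, hf, hsq, hle⟩)
    · exact ⟨ind F₀, Or.inr rfl, h⟩
    · exact ⟨∑ i, ind (f i), Or.inl ⟨hsq, f, hf, le_refl _⟩, hle⟩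

lemma contraction_exists_le (S : Finset (Finset V)) (A : Finset V) :
    ∀ F ∈ S, ∃ Kc ∈ contraction S A, Kc ⊆ F \ A := by
  suffices h : ∀ n : ℕ, ∀ F ∈ S, (F \ A).card ≤ n → ∃ Kc ∈ contraction S A, Kc ⊆ F \ A by
    intro F hF; exact h _ F hF le_rfl
  intro n
  induction n with
  | zero =>
    intro F hF hc
    by_cases hmin : ∀ G ∈ S, G \ A ⊆ F \ A → G \ A = F \ A
    · exact ⟨F \ A, Finset.mem_filter.mpr ⟨Finset.mem_image_of_mem _ hF, hmin⟩,
        Finset.Subset.refl _⟩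
    · push_neg at hmin
      obtain ⟨G, hG, hsub, hne⟩ := hmin
      have hss : G \ A ⊂ F \ A := ssubset_of_subset_of_ne hsub hne
      have := Finset.card_lt_card hss
      omega
  | succ n ih =>
    intro F hF hc
    by_cases hmin : ∀ G ∈ S, G \ A ⊆ F \ A → G \ A = F \ A
    · exact ⟨F \ A, Finset.mem_filter.mpr ⟨Finset.mem_image_of_mem _ hF, hmin⟩,
        Finset.Subset.refl _⟩
    · push_neg at hmin
      obtain ⟨G, hG, hsub, hne⟩ := hmin
      have hss : G \ A ⊂ F \ A := ssubset_of_subset_of_ne hsub hne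
      have hlt := Finset.card_lt_card hss
      obtain ⟨Kc, hKc, hKs⟩ := ih G hG (by omega)
      exact ⟨Kc, hKc, hKs.trans hsub⟩

lemma core (S : Finset (Finset V)) (hanti : ∀ F ∈ S, ∀ G ∈ S, F ⊆ G → F = G)
    (F₁ A : Finset V) (hF₁S : F₁ ∈ S) (hAF : A ⊆ F₁) (hnFA : ¬ F₁ ⊆ A)
    (hdich : ∀ H ∈ S, A ⊆ H ∨ A ∩ H = ∅)
    (hsp : ∀ H ∈ S, ∀ H' ∈ S, H ≠ F₁ → H' ≠ F₁ →
      ((H ∩ H').Nonempty ↔ ((H ∩ H') \ F₁).Nonempty))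
    (k : ℕ) (d : V →₀ ℕ) :
    (ind F₁ ≤ d + ind A ∨ SqTuple S k (d + ind A)) ↔
      (ind (F₁ \ A) ≤ d ∨ SqTuple (contraction S A) k d) := by
  constructor
  · rintro (h | ⟨f, hf, hsq, hle⟩)
    · left
      rw [ind_le_iff] at h ⊢
      intro v hv
      rw [Finset.mem_sdiff] at hv
      have := h v hv.1
      rw [Finsupp.add_apply, ind_apply, if_neg hv.2] at this
      omega
    · right
      choose g hg1 hg2 using fun i => contraction_exists_le S A (f i) (hf i)
      have hterm : ∀ i v, ind (g i) v ≤ ind (f i) v := by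
        intro i v
        rw [ind_apply, ind_apply]
        by_cases h : v ∈ g i
        · rw [if_pos h, if_pos (Finset.mem_sdiff.mp (hg2 i h)).1]
        · rw [if_neg h]; exact Nat.zero_le _
      refine ⟨g, hg1, ?_, ?_⟩
      · intro v
        rw [Finset.sum_apply']
        calc ∑ i, ind (g i) v ≤ ∑ i, ind (f i) v :=
              Finset.sum_le_sum (fun i _ => hterm i v)
          _ = (∑ i, ind (f i)) v := (Finset.sum_apply' v).symm
          _ ≤ 1 := hsq v
      · rw [Finsupp.le_def]
        intro v
        rw [Finset.sum_apply']
        by_cases hv : ∃ i, v ∈ g i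
        · obtain ⟨i, hvi⟩ := hv
          have hvA : v ∉ A := (Finset.mem_sdiff.mp (hg2 i hvi)).2
          have h1 : (∑ i, ind (f i)) v ≤ d v := by
            have := Finsupp.le_def.mp hle v
            rwa [Finsupp.add_apply, ind_apply, if_neg hvA, add_zero] at this
          calc ∑ i, ind (g i) v ≤ ∑ i, ind (f i) v :=
                Finset.sum_le_sum (fun i _ => hterm i v)
            _ = (∑ i, ind (f i)) v := (Finset.sum_apply' v).symm
            _ ≤ d v := h1
        · push_neg at hv
          rw [Finset.sum_eq_zero (fun i _ => by rw [ind_apply, if_neg (hv i)])]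
          exact Nat.zero_le _
  · rintro (h | ⟨g, hg, hsq, hle⟩)
    · left
      rw [ind_le_iff] at h ⊢
      intro v hv
      rw [Finsupp.add_apply, ind_apply]
      by_cases hvA : v ∈ A
      · rw [if_pos hvA]; omega
      · rw [if_neg hvA]
        have := h v (Finset.mem_sdiff.mpr ⟨hv, hvA⟩)
        omega
    · have hpre : ∀ i, ∃ Hh ∈ S, Hh \ A = g i := by
        intro i
        have := (Finset.mem_filter.mp (hg i)).1
        exact Finset.mem_image.mp this
      choose H hH1 hH2 using hpre
      have hgdisj : ∀ (i j : Fin k), i ≠ j → ∀ v, v ∈ g i → v ∈ g j → False := by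
        intro i j hij v hvi hvj
        have h2 : 2 ≤ ∑ l, ind (g l) v := by
          calc 2 = ∑ l ∈ ({i, j} : Finset (Fin k)), ind (g l) v := by
                rw [Finset.sum_pair hij, ind_apply, ind_apply, if_pos hvi, if_pos hvj]
            _ ≤ ∑ l, ind (g l) v :=
                Finset.sum_le_sum_of_subset (Finset.subset_univ _)
        have := hsq v
        rw [Finset.sum_apply'] at this
        omega
      by_cases hF : ∃ i, H i = F₁
      · left
        obtain ⟨i, hi⟩ := hF
        rw [ind_le_iff]
        intro v hv
        rw [Finsupp.add_apply, ind_apply]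
        by_cases hvA : v ∈ A
        · rw [if_pos hvA]; omega
        · rw [if_neg hvA]
          have hvg : v ∈ g i := by
            rw [← hH2 i, hi]; exact Finset.mem_sdiff.mpr ⟨hv, hvA⟩
          have h1 : 1 ≤ (∑ l, ind (g l)) v := by
            rw [Finset.sum_apply']
            have hle1 : 1 ≤ ind (g i) v := by rw [ind_apply, if_pos hvg]
            exact le_trans hle1 (Finset.single_le_sum
              (f := fun l => ind (g l) v) (fun _ _ => Nat.zero_le _) (Finset.mem_univ i))
          have := Finsupp.le_def.mp hle v
          omega
      · right
        push_neg at hF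
        have huniq : ∀ i j, i ≠ j → (A ∩ H i).Nonempty → (A ∩ H j).Nonempty → False := by
          intro i j hij hi hj
          have hAi : A ⊆ H i := (hdich (H i) (hH1 i)).resolve_right
            (fun h => by rw [h] at hi; exact Finset.not_nonempty_empty hi)
          have hAj : A ⊆ H j := (hdich (H j) (hH1 j)).resolve_right
            (fun h => by rw [h] at hj; exact Finset.not_nonempty_empty hj)
          obtain ⟨w, hw⟩ := hi
          have hwA : w ∈ A := (Finset.mem_inter.mp hw).1
          have hint : (H i ∩ H j).Nonempty :=
            ⟨w, Finset.mem_inter.mpr ⟨hAi hwA, hAj hwA⟩⟩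
          have hsub : H i ∩ H j ⊆ A := by
            intro v hv
            rw [Finset.mem_inter] at hv
            by_contra hvA
            exact hgdisj i j hij v
              (by rw [← hH2 i]; exact Finset.mem_sdiff.mpr ⟨hv.1, hvA⟩)
              (by rw [← hH2 j]; exact Finset.mem_sdiff.mpr ⟨hv.2, hvA⟩)
          obtain ⟨v, hv⟩ := (hsp (H i) (hH1 i) (H j) (hH1 j) (hF i) (hF j)).mp hint
          rw [Finset.mem_sdiff] at hv
          exact hv.2 (hAF (hsub hv.1))
        have htermHg : ∀ i v, v ∉ A → ind (H i) v ≤ ind (g i) v := by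
          intro i v hvA
          rw [ind_apply, ind_apply]
          by_cases hv : v ∈ H i
          · rw [if_pos hv, if_pos (by rw [← hH2 i]; exact Finset.mem_sdiff.mpr ⟨hv, hvA⟩)]
          · rw [if_neg hv]; exact Nat.zero_le _
        have hsqH : ∀ v, (∑ i, ind (H i)) v ≤ 1 := by
          intro v
          rw [Finset.sum_apply']
          by_cases hvA : v ∈ A
          · by_cases hex : ∃ i, v ∈ H i
            · obtain ⟨i₀, hi₀⟩ := hex
              have hz : ∀ j ∈ Finset.univ, j ≠ i₀ → ind (H j) v = 0 := by
                intro j _ hj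
                rw [ind_apply, if_neg ?_]
                intro hvj
                exact huniq j i₀ hj ⟨v, Finset.mem_inter.mpr ⟨hvA, hvj⟩⟩
                  ⟨v, Finset.mem_inter.mpr ⟨hvA, hi₀⟩⟩
              rw [Finset.sum_eq_single_of_mem i₀ (Finset.mem_univ _) hz, ind_apply]
              split <;> omega
            · push_neg at hex
              rw [Finset.sum_eq_zero (fun i _ => by rw [ind_apply, if_neg (hex i)])]
              omega
          · calc ∑ i, ind (H i) v ≤ ∑ i, ind (g i) v :=
                  Finset.sum_le_sum (fun i _ => htermHg i v hvA)
              _ = (∑ i, ind (g i)) v := (Finset.sum_apply' v).symm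
              _ ≤ 1 := hsq v
        refine ⟨H, hH1, hsqH, ?_⟩
        rw [Finsupp.le_def]
        intro v
        rw [Finsupp.add_apply, ind_apply]
        by_cases hvA : v ∈ A
        · rw [if_pos hvA]
          have := hsqH v
          omega
        · rw [if_neg hvA, add_zero]
          have hc : (∑ i, ind (H i)) v ≤ (∑ i, ind (g i)) v := by
            rw [Finset.sum_apply', Finset.sum_apply']
            exact Finset.sum_le_sum (fun i _ => htermHg i v hvA)
          have := Finsupp.le_def.mp hle v
          omega

end CMForestAux

section Statements

variable {V : Type} [Fintype V] [DecidableEq V] (K : Type) [Field K]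

theorem stmt14 (Δ : SimplicialComplexOn V)
    (hcov : ∀ v : V, ∃ F ∈ Δ.facets, v ∈ F)
    (Fs Gs : Finset (Finset V))
    (hforest : HasLeafProp Δ.facets)
    (hdecomp : IsGraftingDecomp Δ.facets Fs Gs)
    (F₁ : Finset V) (hF₁ : F₁ ∈ Fs) (hspec : IsSpecialLeafOf Δ.facets F₁)
    (hmeet : ∃ G ∈ Gs, (F₁ ∩ G).Nonempty)
    (A : Finset V)
    (hAdef : A = F₁.filter fun v => ∀ G ∈ Gs, (F₁ ∩ G).Nonempty → v ∈ G) :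
    ∀ k : ℕ, 2 ≤ k → k ≤ matchingNumberOf Δ.facets →
      (sqfreePow K (facetIdealOf K Δ.facets) k + Ideal.span {xMon K F₁}).colon
          (Ideal.span {xMon K A}) =
        sqfreePow K (facetIdealOf K (contraction Δ.facets A)) k +
          Ideal.span {xMon K (F₁ \ A)} := by
  intro k _ _
  classical
  obtain ⟨hunion, hdisjFG, _hcover, _hleaves, hFdisj, _hrec⟩ := hdecomp
  have hF₁S : F₁ ∈ Δ.facets := by rw [hunion]; exact Finset.mem_union_left _ hF₁
  have hAF : A ⊆ F₁ := by rw [hAdef]; exact Finset.filter_subset _ _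
  have hnFA : ¬ F₁ ⊆ A := by
    intro h
    obtain ⟨G, hG, hne⟩ := hmeet
    have hGS : G ∈ Δ.facets := by rw [hunion]; exact Finset.mem_union_right _ hG
    have hsubG : F₁ ⊆ G := by
      intro v hv
      have hvA := h hv
      rw [hAdef, Finset.mem_filter] at hvA
      exact hvA.2 G hG hne
    have heq : F₁ = G := Δ.antichain F₁ hF₁S G hGS hsubG
    exact (Finset.disjoint_left.mp hdisjFG hF₁) (heq ▸ hG)
  have hdich : ∀ H ∈ Δ.facets, A ⊆ H ∨ A ∩ H = ∅ := by
    intro H hH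
    rw [hunion, Finset.mem_union] at hH
    rcases hH with hH | hH
    · by_cases hHF : H = F₁
      · left; rw [hHF]; exact hAF
      · right
        have h0 : F₁ ∩ H = ∅ := hFdisj F₁ hF₁ H hH (fun h => hHF h.symm)
        apply Finset.eq_empty_of_forall_notMem
        intro v hv
        rw [Finset.mem_inter] at hv
        have hv2 : v ∈ F₁ ∩ H := Finset.mem_inter.mpr ⟨hAF hv.1, hv.2⟩
        rw [h0] at hv2
        exact absurd hv2 (Finset.notMem_empty v)
    · by_cases hne : (F₁ ∩ H).Nonempty
      · left
        intro v hv
        rw [hAdef, Finset.mem_filter] at hv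
        exact hv.2 H hH hne
      · right
        apply Finset.eq_empty_of_forall_notMem
        intro v hv
        rw [Finset.mem_inter] at hv
        exact hne ⟨v, Finset.mem_inter.mpr ⟨hAF hv.1, hv.2⟩⟩
  have hcore := CMForestAux.core Δ.facets Δ.antichain F₁ A hF₁S hAF hnFA hdich hspec.2 k
  apply le_antisymm
  · intro p hp
    rw [Ideal.mem_colon_span_singleton, CMForestAux.xMon_eq K A] at hp
    rw [CMForestAux.mem_sum_iff]
    intro e he
    have hc : coeff (e + CMForestAux.ind A) (p * monomial (CMForestAux.ind A) (1 : K))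
        = coeff e p := by
      rw [coeff_mul_monomial, mul_one]
    have hsupp : e + CMForestAux.ind A ∈
        (p * monomial (CMForestAux.ind A) (1 : K)).support := by
      rw [mem_support_iff, hc]
      exact mem_support_iff.mp he
    exact (hcore e).mp ((CMForestAux.mem_sum_iff K Δ.facets F₁ k _).mp hp _ hsupp)
  · rw [CMForestAux.sum_repr]
    apply Ideal.span_le.mpr
    rintro q ⟨d, hd, rfl⟩
    rw [SetLike.mem_coe, Ideal.mem_colon_span_singleton]
    beta_reduce
    rw [CMForestAux.xMon_eq K A, monomial_mul, one_mul, CMForestAux.mem_sum_iff]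
    intro e he
    rw [support_monomial, if_neg one_ne_zero, Finset.mem_singleton] at he
    subst he
    apply (hcore d).mpr
    rcases hd with hd | hd
    · obtain ⟨hsqd, f, hf, hle⟩ := hd
      exact Or.inr ⟨f, hf, fun v => le_trans (Finsupp.le_def.mp hle v) (hsqd v), hle⟩
    · rw [Set.mem_singleton_iff] at hd
      subst hd
      exact Or.inl (le_refl _)


end Statements
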